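/- Let a < 0 < b be integers, let A = {a, a+1, …, b} \ {0}, and let (Y_t) be the conditioned walk on ℤ \ {0}. Then the total mass of the equilibrium measure of A equals (b − a)/2; explicitly, Q_a[τ̄_A = ∞]·a² + Q_b[τ̄_A = ∞]·b² = (b − a)/2, and these are the only two points of A where the equilibrium measure e_A(x) = 1[x ∈ A]·Q_x[τ̄_A = ∞]·x² is nonzero. Consequently, the capacity of the interval [a,b] with respect to the conditioned walk equals half its diameter. -/

import Mathlib

open MeasureTheory ProbabilityTheory Finset
open scoped ENNReal

/-- One step transition probability of the walk on `ℤ \ {0}` conditioned to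
never hit the origin: `P(x, x+1) = |x+1|/(2|x|)`, `P(x, x-1) = |x-1|/(2|x|)`. -/
noncomputable def condStepZ (u v : ℤ) : ℝ≥0∞ :=
  ENNReal.ofReal
    (if v = u + 1 then |(u : ℝ) + 1| / (2 * |(u : ℝ)|)
      else if v = u - 1 then |(u : ℝ) - 1| / (2 * |(u : ℝ)|) else 0)

/-- `Q` is the law of the conditioned walk `Y` on `ℤ \ {0}` (transition
probabilities `condStepZ`) started at `x`. -/
def IsCondWalkZ {Ω : Type*} [MeasurableSpace Ω] (Q : Measure Ω) (Y : ℕ → Ω → ℤ)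
    (x : ℤ) : Prop :=
  IsProbabilityMeasure Q ∧ (∀ t, Measurable (Y t)) ∧
    ∀ (t : ℕ) (γ : ℕ → ℤ), γ 0 = x →
      Q {ω | ∀ s ≤ t, Y s ω = γ s} = ∏ s ∈ Finset.range t, condStepZ (γ s) (γ (s + 1))

open Filter
open scoped Topology

section Aux

lemma condStepZ_of_ne {u v : ℤ} (h1 : v ≠ u + 1) (h2 : v ≠ u - 1) : condStepZ u v = 0 := by
  simp [condStepZ, h1, h2]

lemma condStepZ_neg (u v : ℤ) : condStepZ (-u) (-v) = condStepZ u v := by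
  unfold condStepZ
  congr 1
  by_cases hv : v = u + 1
  · have hv' : -v = -u - 1 := by omega
    have hne : ¬(-v = -u + 1) := by omega
    rw [if_neg hne, if_pos hv', if_pos hv]
    push_cast
    rw [show -(u:ℝ) - 1 = -((u:ℝ)+1) by ring, abs_neg, abs_neg]
  · by_cases hv2 : v = u - 1
    · have hv' : -v = -u + 1 := by omega
      rw [if_pos hv', if_neg hv, if_pos hv2]
      push_cast
      rw [show -(u:ℝ) + 1 = -((u:ℝ)-1) by ring, abs_neg, abs_neg]
    · have h1 : ¬(-v = -u + 1) := by omega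
      have h2 : ¬(-v = -u - 1) := by omega
      rw [if_neg h1, if_neg h2, if_neg hv, if_neg hv2]

def extPath (x : ℤ) (t : ℕ) (p : Fin t → ℤ) : ℕ → ℤ :=
  fun s => if h : 1 ≤ s ∧ s ≤ t then p ⟨s - 1, by omega⟩ else x

lemma extPath_zero (x : ℤ) (t : ℕ) (p : Fin t → ℤ) : extPath x t p 0 = x := by
  simp [extPath]

lemma extPath_pos (x : ℤ) (t : ℕ) (p : Fin t → ℤ) (s : ℕ) (h1 : 1 ≤ s) (h2 : s ≤ t) :
    extPath x t p s = p ⟨s - 1, by omega⟩ := by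
  simp [extPath, h1, h2]

open scoped Classical in
noncomputable def sur (A : Set ℤ) : ℕ → ℤ → ℝ≥0∞
  | 0, _ => 1
  | n+1, x => (if x + 1 ∈ A then 0 else condStepZ x (x+1) * sur A n (x+1))
      + (if x - 1 ∈ A then 0 else condStepZ x (x-1) * sur A n (x-1))

open scoped Classical in
lemma sur_succ (A : Set ℤ) (n : ℕ) (x : ℤ) :
    sur A (n+1) x = (if x + 1 ∈ A then 0 else condStepZ x (x+1) * sur A n (x+1))
      + (if x - 1 ∈ A then 0 else condStepZ x (x-1) * sur A n (x-1)) := by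
  simp [sur]

lemma condStepZ_up_pos (u : ℤ) (hu : 0 < u) :
    condStepZ u (u+1) = ENNReal.ofReal (((u:ℝ)+1)/(2*(u:ℝ))) := by
  have huR : (0:ℝ) < (u:ℝ) := by exact_mod_cast hu
  unfold condStepZ
  rw [if_pos rfl, abs_of_nonneg (by linarith : (0:ℝ) ≤ (u:ℝ)+1),
    abs_of_nonneg (by linarith : (0:ℝ) ≤ (u:ℝ))]

lemma condStepZ_down_pos (u : ℤ) (hu : 0 < u) :
    condStepZ u (u-1) = ENNReal.ofReal (((u:ℝ)-1)/(2*(u:ℝ))) := by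
  have huR : (1:ℝ) ≤ (u:ℝ) := by exact_mod_cast hu
  unfold condStepZ
  rw [if_neg (by omega : ¬(u - 1 = u + 1)), if_pos rfl,
    abs_of_nonneg (by linarith : (0:ℝ) ≤ (u:ℝ)-1),
    abs_of_nonneg (by linarith : (0:ℝ) ≤ (u:ℝ))]

open scoped Classical in
noncomputable def wt (A : Set ℤ) (x : ℤ) (t : ℕ) (p : Fin t → ℤ) : ℝ≥0∞ :=
  if ∀ i, p i ∉ A then
    ∏ s ∈ Finset.range t, condStepZ (extPath x t p s) (extPath x t p (s+1)) else 0

lemma extPath_cons (x y : ℤ) (t : ℕ) (q : Fin t → ℤ) (s : ℕ) (hs : s ≤ t) :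
    extPath x (t+1) (Fin.cons y q) (s+1) = extPath y t q s := by
  unfold extPath
  by_cases h : 1 ≤ s ∧ s ≤ t
  · rw [dif_pos (by omega : 1 ≤ s + 1 ∧ s + 1 ≤ t + 1), dif_pos h]
    have he : (⟨s + 1 - 1, by omega⟩ : Fin (t+1)) = Fin.succ ⟨s - 1, by omega⟩ := by
      ext; simp; omega
    rw [he, Fin.cons_succ]
  · have hs0 : s = 0 := by omega
    subst hs0
    rw [dif_pos (by omega : 1 ≤ 0 + 1 ∧ 0 + 1 ≤ t + 1), dif_neg (by omega)]
    exact Fin.cons_zero _ _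

open scoped Classical in
lemma wt_cons (A : Set ℤ) (x y : ℤ) (t : ℕ) (q : Fin t → ℤ) :
    wt A x (t+1) (Fin.cons y q) = if y ∈ A then 0 else condStepZ x y * wt A y t q := by
  unfold wt
  by_cases hy : y ∈ A
  · rw [if_pos hy, if_neg]
    intro hall
    exact (hall 0) (by simpa using hy)
  · rw [if_neg hy]
    by_cases hq : ∀ i : Fin t, q i ∉ A
    · rw [if_pos hq, if_pos]
      · rw [Finset.prod_range_succ', mul_comm]
        congr 1
        · apply Finset.prod_congr rfl
          intro s hs
          rw [Finset.mem_range] at hs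
          rw [extPath_cons _ _ _ _ _ (by omega), extPath_cons _ _ _ _ _ (by omega)]
      · intro i
        refine Fin.cases ?_ ?_ i
        · simpa using hy
        · intro j; simpa using hq j
    · rw [if_neg hq, mul_zero, if_neg]
      push_neg at hq ⊢
      obtain ⟨i, hi⟩ := hq
      exact ⟨i.succ, by simpa using hi⟩

open scoped Classical in
lemma tsum_wt (A : Set ℤ) : ∀ t x, ∑' p : Fin t → ℤ, wt A x t p = sur A t x
  | 0, x => by
    haveI : Unique (Fin 0 → ℤ) := ⟨⟨fun i => i.elim0⟩, fun p => funext fun i => i.elim0⟩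
    rw [tsum_eq_single (default : Fin 0 → ℤ)
      (fun b hb => (hb (Subsingleton.elim b default)).elim)]
    simp [wt, sur]
  | t+1, x => by
    rw [← Equiv.tsum_eq (Fin.consEquiv fun _ => ℤ), ENNReal.tsum_prod']
    have hstep : ∀ y : ℤ, (∑' q : Fin t → ℤ, wt A x (t+1) ((Fin.consEquiv fun _ => ℤ) (y, q)))
        = if y ∈ A then 0 else condStepZ x y * sur A t y := by
      intro y
      have : ∀ q : Fin t → ℤ, (Fin.consEquiv fun _ => ℤ) (y, q) = Fin.cons y q := fun _ => rfl
      simp_rw [this, wt_cons]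
      split_ifs with hy
      · exact tsum_zero
      · rw [ENNReal.tsum_mul_left, tsum_wt A t y]
    simp_rw [hstep]
    rw [tsum_eq_sum (s := {x - 1, x + 1}) ?_]
    · rw [Finset.sum_pair (by omega : x - 1 ≠ x + 1)]
      show _ = (if x + 1 ∈ A then 0 else condStepZ x (x+1) * sur A t (x+1))
          + (if x - 1 ∈ A then 0 else condStepZ x (x-1) * sur A t (x-1))
      rw [add_comm]
    · intro y hy
      simp only [Finset.mem_insert, Finset.mem_singleton] at hy
      push_neg at hy
      rw [condStepZ_of_ne hy.2 hy.1]
      split_ifs <;> simp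

lemma meas_eq_tsum_wt {Ω : Type*} [MeasurableSpace Ω] {Q : Measure Ω} {Y : ℕ → Ω → ℤ} {x : ℤ}
    (h : IsCondWalkZ Q Y x) (A : Set ℤ) (t : ℕ) :
    Q {ω | ∀ s, 1 ≤ s → s ≤ t → Y s ω ∉ A} = ∑' p : Fin t → ℤ, wt A x t p := by
  classical
  obtain ⟨hprob, hmeas, hfdd⟩ := h
  set E : Set Ω := {ω | ∀ s, 1 ≤ s → s ≤ t → Y s ω ∉ A} with hE
  set D : (Fin t → ℤ) → Set Ω := fun p =>
    if ∀ i, p i ∉ A then {ω | ∀ s ≤ t, Y s ω = extPath x t p s} else ∅ with hD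
  have hDmeas : ∀ p, MeasurableSet (D p) := by
    intro p; rw [hD]; dsimp only
    split_ifs
    · have he : {ω | ∀ s ≤ t, Y s ω = extPath x t p s}
          = ⋂ s, ⋂ (_ : s ≤ t), (Y s) ⁻¹' {extPath x t p s} := by
        ext ω; simp [Set.mem_iInter]
      rw [he]
      exact MeasurableSet.iInter fun s => MeasurableSet.iInter fun _ =>
        (hmeas s) MeasurableSet.of_discrete
    · exact MeasurableSet.empty
  have hQD : ∀ p, Q (D p) = wt A x t p := by
    intro p; rw [hD]; dsimp only; unfold wt; split_ifs with hgood
    · exact hfdd t (extPath x t p) (extPath_zero x t p)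
    · exact measure_empty
  have hdisj : Pairwise (Function.onFun Disjoint D) := by
    intro p q hpq
    simp only [Function.onFun, hD]
    split_ifs with hp hq hq
    · rw [Set.disjoint_left]
      intro ω hω hω'
      apply hpq
      funext i
      have h1 := hω (i.val + 1) (by omega)
      have h2 := hω' (i.val + 1) (by omega)
      rw [extPath_pos x t p _ (by omega) (by omega)] at h1
      rw [extPath_pos x t q _ (by omega) (by omega)] at h2
      have hi : (⟨i.val + 1 - 1, by omega⟩ : Fin t) = i := by ext; simp
      rw [hi] at h1 h2
      rw [← h1, ← h2]
    · exact Set.disjoint_empty _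
    · exact Set.empty_disjoint _
    · exact Set.disjoint_empty _
  have hsub1 : (⋃ p, D p) ⊆ E := by
    intro ω hω
    rw [Set.mem_iUnion] at hω
    obtain ⟨p, hp⟩ := hω
    rw [hD] at hp; dsimp only at hp
    split_ifs at hp with hgood
    · intro s h1 h2
      rw [hp s h2, extPath_pos x t p s h1 h2]
      exact hgood _
    · exact absurd hp (Set.notMem_empty ω)
  have hY0 : Q ((Y 0) ⁻¹' {x})ᶜ = 0 := by
    have h0 : Q {ω | ∀ s ≤ 0, Y s ω = x} = 1 := by
      have := hfdd 0 (fun _ => x) rfl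
      simpa using this
    have hset : {ω | ∀ s ≤ 0, Y s ω = x} = (Y 0) ⁻¹' {x} := by
      ext ω
      constructor
      · intro hh; exact hh 0 le_rfl
      · intro hh s hs
        have : s = 0 := Nat.le_zero.mp hs
        subst this; exact hh
    rw [hset] at h0
    rw [measure_compl ((hmeas 0) MeasurableSet.of_discrete) (measure_ne_top Q _), h0]
    simp [measure_univ]
  have hsub2 : E ⊆ (⋃ p, D p) ∪ ((Y 0) ⁻¹' {x})ᶜ := by
    intro ω hω
    by_cases hx0 : Y 0 ω = x
    · left
      rw [Set.mem_iUnion]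
      refine ⟨fun i => Y (i.val + 1) ω, ?_⟩
      rw [hD]; dsimp only
      rw [if_pos]
      · intro s hs
        rcases Nat.eq_zero_or_pos s with h0 | h1
        · subst h0; rw [extPath_zero]; exact hx0
        · rw [extPath_pos x t _ s h1 hs]
          show Y s ω = Y (s - 1 + 1) ω
          have : s - 1 + 1 = s := by omega
          rw [this]
      · intro i
        exact hω (i.val + 1) (by omega) (by omega)
    · right; exact hx0
  have hle : Q E ≤ ∑' p, Q (D p) := by
    calc Q E ≤ Q ((⋃ p, D p) ∪ ((Y 0) ⁻¹' {x})ᶜ) := measure_mono hsub2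
      _ ≤ Q (⋃ p, D p) + Q (((Y 0) ⁻¹' {x})ᶜ) := measure_union_le _ _
      _ = Q (⋃ p, D p) := by rw [hY0, add_zero]
      _ = ∑' p, Q (D p) := measure_iUnion hdisj hDmeas
  have hge : ∑' p, Q (D p) ≤ Q E := by
    rw [← measure_iUnion hdisj hDmeas]
    exact measure_mono hsub1
  have : Q E = ∑' p, Q (D p) := le_antisymm hle hge
  rw [this]
  exact tsum_congr hQD

end Aux

section RealSeq

noncomputable def fseq (b : ℤ) : ℕ → ℤ → ℝ
  | 0, _ => 1
  | n+1, x => (((x:ℝ)+1)/(2*(x:ℝ))) * fseq b n (x+1) +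
      (if x - 1 ≤ b then 0 else (((x:ℝ)-1)/(2*(x:ℝ))) * fseq b n (x-1))

lemma fseq_succ (b : ℤ) (n : ℕ) (x : ℤ) :
    fseq b (n+1) x = (((x:ℝ)+1)/(2*(x:ℝ))) * fseq b n (x+1) +
      (if x - 1 ≤ b then 0 else (((x:ℝ)-1)/(2*(x:ℝ))) * fseq b n (x-1)) := by
  simp [fseq]

variable {b : ℤ}

lemma fseq_nonneg (hb : 1 ≤ b) : ∀ (n : ℕ) (x : ℤ), b < x → 0 ≤ fseq b n x := by
  intro n
  induction n with
  | zero => intro x hx; simp [fseq]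
  | succ n ih =>
    intro x hx
    have hx2 : (2:ℝ) ≤ (x:ℝ) := by exact_mod_cast (by omega : (2:ℤ) ≤ x)
    simp only [fseq]
    have h1 : 0 ≤ (((x:ℝ)+1)/(2*(x:ℝ))) * fseq b n (x+1) := by
      apply mul_nonneg (by positivity) (ih (x+1) (by omega))
    split_ifs with hg
    · simpa using h1
    · have h2 : 0 ≤ (((x:ℝ)-1)/(2*(x:ℝ))) * fseq b n (x-1) := by
        apply mul_nonneg
        · apply div_nonneg (by linarith) (by linarith)
        · exact ih (x-1) (by omega)
      linarith

lemma fseq_le_one (hb : 1 ≤ b) : ∀ (n : ℕ) (x : ℤ), b < x → fseq b n x ≤ 1 := by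
  intro n
  induction n with
  | zero => intro x hx; simp [fseq]
  | succ n ih =>
    intro x hx
    have hx2 : (2:ℝ) ≤ (x:ℝ) := by exact_mod_cast (by omega : (2:ℤ) ≤ x)
    simp only [fseq]
    have hc1 : 0 ≤ ((x:ℝ)+1)/(2*(x:ℝ)) := by positivity
    have h1 : (((x:ℝ)+1)/(2*(x:ℝ))) * fseq b n (x+1) ≤ ((x:ℝ)+1)/(2*(x:ℝ)) := by
      nlinarith [ih (x+1) (by omega), fseq_nonneg hb n (x+1) (by omega)]
    split_ifs with hg
    · have : ((x:ℝ)+1)/(2*(x:ℝ)) ≤ 1 := by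
        rw [div_le_one (by linarith)]; linarith
      linarith
    · have hc2 : 0 ≤ ((x:ℝ)-1)/(2*(x:ℝ)) := by
        apply div_nonneg <;> linarith
      have h2 : (((x:ℝ)-1)/(2*(x:ℝ))) * fseq b n (x-1) ≤ ((x:ℝ)-1)/(2*(x:ℝ)) := by
        nlinarith [ih (x-1) (by omega), fseq_nonneg hb n (x-1) (by omega)]
      have hsum : ((x:ℝ)+1)/(2*(x:ℝ)) + ((x:ℝ)-1)/(2*(x:ℝ)) = 1 := by
        field_simp; ring
      linarith

lemma fseq_succ_le (hb : 1 ≤ b) : ∀ (n : ℕ) (x : ℤ), b < x →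
    fseq b (n+1) x ≤ fseq b n x := by
  intro n
  induction n with
  | zero => intro x hx; simpa [fseq] using fseq_le_one hb 1 x hx
  | succ n ih =>
    intro x hx
    have hx2 : (2:ℝ) ≤ (x:ℝ) := by exact_mod_cast (by omega : (2:ℤ) ≤ x)
    show (((x:ℝ)+1)/(2*(x:ℝ))) * fseq b (n+1) (x+1) +
      (if x - 1 ≤ b then 0 else (((x:ℝ)-1)/(2*(x:ℝ))) * fseq b (n+1) (x-1)) ≤
      (((x:ℝ)+1)/(2*(x:ℝ))) * fseq b n (x+1) +
      (if x - 1 ≤ b then 0 else (((x:ℝ)-1)/(2*(x:ℝ))) * fseq b n (x-1))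
    have hc1 : 0 ≤ ((x:ℝ)+1)/(2*(x:ℝ)) := by positivity
    have hc2 : 0 ≤ ((x:ℝ)-1)/(2*(x:ℝ)) := by apply div_nonneg <;> linarith
    have h1 := mul_le_mul_of_nonneg_left (ih (x+1) (by omega)) hc1
    split_ifs with hg
    · linarith
    · have h2 := mul_le_mul_of_nonneg_left (ih (x-1) (by omega)) hc2
      linarith

lemma fseq_antitone (hb : 1 ≤ b) (x : ℤ) (hx : b < x) :
    Antitone (fun n => fseq b n x) :=
  antitone_nat_of_succ_le (fun n => fseq_succ_le hb n x hx)

lemma fseq_lower (hb : 1 ≤ b) : ∀ (n : ℕ) (x : ℤ), b < x →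
    1 - (b:ℝ)/(x:ℝ) ≤ fseq b n x := by
  intro n
  induction n with
  | zero =>
    intro x hx
    have hx2 : (2:ℝ) ≤ (x:ℝ) := by exact_mod_cast (by omega : (2:ℤ) ≤ x)
    have hb1 : (1:ℝ) ≤ (b:ℝ) := by exact_mod_cast hb
    simp only [fseq]
    have : 0 ≤ (b:ℝ)/(x:ℝ) := by positivity
    linarith
  | succ n ih =>
    intro x hx
    have hx2 : (2:ℝ) ≤ (x:ℝ) := by exact_mod_cast (by omega : (2:ℤ) ≤ x)
    have hbx : (b:ℝ) < (x:ℝ) := by exact_mod_cast hx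
    have hb1 : (1:ℝ) ≤ (b:ℝ) := by exact_mod_cast hb
    have hc1 : 0 ≤ ((x:ℝ)+1)/(2*(x:ℝ)) := by positivity
    simp only [fseq]
    have h1 := mul_le_mul_of_nonneg_left (ih (x+1) (by omega)) hc1
    push_cast at h1
    split_ifs with hg
    · have hxb : x = b + 1 := by omega
      have hxbR : (x:ℝ) = (b:ℝ) + 1 := by exact_mod_cast congrArg (Int.cast : ℤ → ℝ) hxb
      rw [add_zero]
      have key : (((x:ℝ)+1)/(2*(x:ℝ))) * (1 - (b:ℝ)/((x:ℝ)+1)) = 1 - (b:ℝ)/(x:ℝ) := by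
        rw [hxbR]; field_simp; ring
      linarith
    · have hxg : b < x - 1 := by omega
      have hx1 : (1:ℝ) < (x:ℝ) - 1 := by
        have : (b:ℝ) < (x:ℝ) - 1 := by exact_mod_cast (by omega : (b:ℤ) < x - 1)
        linarith
      have hc2 : 0 ≤ ((x:ℝ)-1)/(2*(x:ℝ)) := by apply div_nonneg <;> linarith
      have h2 := mul_le_mul_of_nonneg_left (ih (x-1) hxg) hc2
      push_cast at h2
      have key : (((x:ℝ)+1)/(2*(x:ℝ))) * (1 - (b:ℝ)/((x:ℝ)+1))
          + (((x:ℝ)-1)/(2*(x:ℝ))) * (1 - (b:ℝ)/((x:ℝ)-1)) = 1 - (b:ℝ)/(x:ℝ) := by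
        field_simp
        ring
      linarith

noncomputable def flim (b x : ℤ) : ℝ := ⨅ n, fseq b n x

lemma flim_bdd (hb : 1 ≤ b) (x : ℤ) (hx : b < x) :
    BddBelow (Set.range fun n => fseq b n x) := by
  refine ⟨0, ?_⟩
  rintro r ⟨n, rfl⟩
  exact fseq_nonneg hb n x hx

lemma flim_tendsto (hb : 1 ≤ b) (x : ℤ) (hx : b < x) :
    Tendsto (fun n => fseq b n x) atTop (𝓝 (flim b x)) :=
  tendsto_atTop_ciInf (fseq_antitone hb x hx) (flim_bdd hb x hx)

lemma flim_le_one (hb : 1 ≤ b) (x : ℤ) (hx : b < x) : flim b x ≤ 1 := by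
  have := ciInf_le (flim_bdd hb x hx) 0
  simpa [fseq, flim] using this

lemma flim_lower (hb : 1 ≤ b) (x : ℤ) (hx : b < x) : 1 - (b:ℝ)/(x:ℝ) ≤ flim b x :=
  le_ciInf fun n => fseq_lower hb n x hx

lemma flim_eq (hb : 1 ≤ b) (x : ℤ) (hx : b < x) :
    flim b x = (((x:ℝ)+1)/(2*(x:ℝ))) * flim b (x+1) +
      (if x - 1 ≤ b then 0 else (((x:ℝ)-1)/(2*(x:ℝ))) * flim b (x-1)) := by
  have h1 : Tendsto (fun n => fseq b (n+1) x) atTop (𝓝 (flim b x)) :=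
    (flim_tendsto hb x hx).comp (tendsto_add_atTop_nat 1)
  have h2 : Tendsto (fun n => fseq b (n+1) x) atTop
      (𝓝 ((((x:ℝ)+1)/(2*(x:ℝ))) * flim b (x+1) +
        (if x - 1 ≤ b then 0 else (((x:ℝ)-1)/(2*(x:ℝ))) * flim b (x-1)))) := by
    simp only [fseq]
    split_ifs with hg
    · have h := (flim_tendsto hb (x+1) (by omega)).const_mul (((x:ℝ)+1)/(2*(x:ℝ)))
      simpa using h.add (tendsto_const_nhds : Tendsto (fun _ : ℕ => (0:ℝ)) atTop (𝓝 0))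
    · exact ((flim_tendsto hb (x+1) (by omega)).const_mul (((x:ℝ)+1)/(2*(x:ℝ)))).add
        ((flim_tendsto hb (x-1) (by omega)).const_mul (((x:ℝ)-1)/(2*(x:ℝ))))
  exact tendsto_nhds_unique h1 h2

lemma fseq_tendsto_boundary (hb : 1 ≤ b) :
    Tendsto (fun n => fseq b n (b+1)) atTop (𝓝 (1/((b:ℝ)+1))) := by
  have hbR : (1:ℝ) ≤ (b:ℝ) := by exact_mod_cast hb
  suffices h : flim b (b+1) = 1/((b:ℝ)+1) by
    have := flim_tendsto hb (b+1) (by omega)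
    rwa [h] at this
  set θ := flim b (b+1) with hθ
  have hbound : ((b:ℝ)+2) * flim b (b+2) = 2 * ((b:ℝ)+1) * θ := by
    have he := flim_eq hb (b+1) (by omega)
    rw [if_pos (by omega)] at he
    have hcast : ((b+1:ℤ):ℝ) = (b:ℝ)+1 := by push_cast; ring
    rw [hcast] at he
    have harg : (b+1+1 : ℤ) = b+2 := by ring
    rw [harg] at he
    have hne : (b:ℝ)+1 ≠ 0 := by linarith
    field_simp at he
    linarith [he]
  have hrec : ∀ y : ℤ, b + 1 < y →
      2 * ((y:ℝ)) * flim b y = ((y:ℝ)+1) * flim b (y+1) + ((y:ℝ)-1) * flim b (y-1) := by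
    intro y hy
    have he := flim_eq hb y (by omega)
    rw [if_neg (by omega)] at he
    have hyR : (2:ℝ) ≤ (y:ℝ) := by exact_mod_cast (by omega : (2:ℤ) ≤ y)
    have hne : (y:ℝ) ≠ 0 := by linarith
    field_simp at he
    linarith [he]
  have hlin : ∀ k : ℕ, ((b:ℝ)+(k:ℝ)+1) * flim b (b+(k:ℤ)+1) = ((k:ℝ)+1) * (((b:ℝ)+1) * θ) := by
    have key : ∀ k : ℕ,
        ((b:ℝ)+(k:ℝ)+1) * flim b (b+(k:ℤ)+1) = ((k:ℝ)+1) * (((b:ℝ)+1) * θ) ∧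
        ((b:ℝ)+((k:ℝ)+1)+1) * flim b (b+((k:ℤ)+1)+1) = (((k:ℝ)+1)+1) * (((b:ℝ)+1) * θ) := by
      intro k
      induction k with
      | zero =>
        constructor
        · push_cast
          rw [show b + (0:ℤ) + 1 = b + 1 by ring]
          ring
        · push_cast
          rw [show (b+1+1:ℤ) = b + 2 by ring]
          linarith [hbound]
      | succ k ih =>
        obtain ⟨ih1, ih2⟩ := ih
        have hr := hrec (b + (k:ℤ) + 2) (by omega)
        have hc1 : ((b + (k:ℤ) + 2 : ℤ):ℝ) = (b:ℝ) + (k:ℝ) + 2 := by push_cast; ring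
        rw [hc1] at hr
        rw [show b + (k:ℤ) + 2 + 1 = b + ((k:ℤ)+1+1) + 1 by ring,
            show b + (k:ℤ) + 2 - 1 = b + (k:ℤ) + 1 by ring,
            show b + (k:ℤ) + 2 = b + ((k:ℤ)+1) + 1 by ring] at hr
        constructor
        · push_cast at ih2 ⊢
          linarith [ih2]
        · push_cast at ih1 ih2 ⊢
          linarith [hr, ih1, ih2]
    exact fun k => (key k).1
  have hub : ((b:ℝ)+1) * θ ≤ 1 := by
    have hseq : ∀ k : ℕ, ((b:ℝ)+1) * θ ≤ 1 + (b:ℝ)/((k:ℝ)+1) := by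
      intro k
      have h1 := hlin k
      have h2 : flim b (b+(k:ℤ)+1) ≤ 1 := flim_le_one hb _ (by omega)
      have hk1 : (0:ℝ) < (k:ℝ)+1 := by positivity
      have h3 : ((k:ℝ)+1) * (((b:ℝ)+1) * θ) ≤ (b:ℝ)+(k:ℝ)+1 := by
        rw [← h1]
        nlinarith [flim_lower hb (b+(k:ℤ)+1) (by omega)]
      have h4 : ((b:ℝ)+1) * θ ≤ ((b:ℝ)+(k:ℝ)+1)/((k:ℝ)+1) :=
        (le_div_iff₀ hk1).mpr (by linarith)
      calc ((b:ℝ)+1) * θ ≤ ((b:ℝ)+(k:ℝ)+1)/((k:ℝ)+1) := h4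
        _ = 1 + (b:ℝ)/((k:ℝ)+1) := by field_simp; ring
    have htend : Tendsto (fun k : ℕ => 1 + (b:ℝ)/((k:ℝ)+1)) atTop (𝓝 1) := by
      have h0 : Tendsto (fun k : ℕ => (b:ℝ)/((k:ℝ)+1)) atTop (𝓝 0) := by
        have hcomp := (tendsto_const_div_atTop_nhds_zero_nat (b:ℝ)).comp (tendsto_add_atTop_nat 1)
        refine Tendsto.congr (fun k => ?_) hcomp
        simp only [Function.comp]
        push_cast
        ring
      simpa using (tendsto_const_nhds (x := (1:ℝ))).add h0
    exact ge_of_tendsto htend (Filter.Eventually.of_forall hseq)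
  have hlb : 1 ≤ ((b:ℝ)+1) * θ := by
    have := flim_lower hb (b+1) (by omega)
    have hcast : ((b+1:ℤ):ℝ) = (b:ℝ)+1 := by push_cast; ring
    rw [hcast] at this
    have hne : (b:ℝ)+1 ≠ 0 := by linarith
    rw [hθ]
    have h2 : ((b:ℝ)+1) * (1 - (b:ℝ)/((b:ℝ)+1)) = 1 := by field_simp; ring
    nlinarith [this]
  have : ((b:ℝ)+1) * θ = 1 := le_antisymm hub hlb
  field_simp
  linarith [this]

end RealSeq

section Bridge

open scoped Classical

lemma sur_eq_ofReal_fseq {a b : ℤ} (ha : a < 0) (hb : 0 < b) :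
    ∀ (n : ℕ) (x : ℤ), b < x →
      sur {z : ℤ | a ≤ z ∧ z ≤ b ∧ z ≠ 0} n x = ENNReal.ofReal (fseq b n x) := by
  intro n
  induction n with
  | zero => intro x hx; simp [sur, fseq]
  | succ n ih =>
    intro x hx
    have hb1 : (1:ℤ) ≤ b := hb
    have hx2 : (2:ℝ) ≤ (x:ℝ) := by exact_mod_cast (by omega : (2:ℤ) ≤ x)
    have hnotup : (x + 1) ∉ {z : ℤ | a ≤ z ∧ z ≤ b ∧ z ≠ 0} := by
      intro hmem; exact absurd hmem.2.1 (by omega)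
    have hcup := condStepZ_up_pos x (by omega)
    have hc1 : (0:ℝ) ≤ ((x:ℝ)+1)/(2*(x:ℝ)) := by apply div_nonneg <;> linarith
    have hc2 : (0:ℝ) ≤ ((x:ℝ)-1)/(2*(x:ℝ)) := by apply div_nonneg <;> linarith
    rw [sur_succ, fseq_succ, if_neg hnotup, hcup, ih (x+1) (by omega)]
    by_cases hg : x - 1 ≤ b
    · have hmem : x - 1 ∈ {z : ℤ | a ≤ z ∧ z ≤ b ∧ z ≠ 0} := by
        refine ⟨by omega, by omega, by omega⟩
      rw [if_pos hmem, if_pos hg, add_zero, add_zero,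
        ← ENNReal.ofReal_mul hc1]
    · have hmem : x - 1 ∉ {z : ℤ | a ≤ z ∧ z ≤ b ∧ z ≠ 0} := by
        intro hmem; exact absurd hmem.2.1 (by omega)
      have hcdn := condStepZ_down_pos x (by omega)
      rw [if_neg hmem, if_neg hg, hcdn, ih (x-1) (by omega),
        ← ENNReal.ofReal_mul hc1, ← ENNReal.ofReal_mul hc2,
        ← ENNReal.ofReal_add
          (mul_nonneg hc1 (fseq_nonneg hb1 n (x+1) (by omega)))
          (mul_nonneg hc2 (fseq_nonneg hb1 n (x-1) (by omega)))]

lemma escape_prob {Ω : Type*} [MeasurableSpace Ω] {Q : Measure Ω} {Y : ℕ → Ω → ℤ} {a b : ℤ}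
    (ha : a < 0) (hb : 0 < b) (h : IsCondWalkZ Q Y b) :
    Q {ω | ∀ t : ℕ, 1 ≤ t → Y t ω ∉ {z : ℤ | a ≤ z ∧ z ≤ b ∧ z ≠ 0}} =
      ENNReal.ofReal (1/(2*(b:ℝ))) := by
  set A : Set ℤ := {z : ℤ | a ≤ z ∧ z ≤ b ∧ z ≠ 0} with hA
  haveI : IsProbabilityMeasure Q := h.1
  have hb1 : (1:ℤ) ≤ b := hb
  have hbR : (0:ℝ) < (b:ℝ) := by exact_mod_cast hb
  have hEt : ∀ t, Q {ω | ∀ s, 1 ≤ s → s ≤ t → Y s ω ∉ A} = sur A t b := by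
    intro t
    rw [meas_eq_tsum_wt h A t, tsum_wt]
  have hEeq : {ω | ∀ t : ℕ, 1 ≤ t → Y t ω ∉ A}
      = ⋂ n, {ω | ∀ s, 1 ≤ s → s ≤ n → Y s ω ∉ A} := by
    ext ω
    simp only [Set.mem_iInter, Set.mem_setOf_eq]
    constructor
    · intro hω n s h1 h2; exact hω s h1
    · intro hω t h1; exact hω t t h1 le_rfl
  have hmeasE : ∀ n : ℕ, NullMeasurableSet {ω | ∀ s, 1 ≤ s → s ≤ n → Y s ω ∉ A} Q := by
    intro n
    have he : {ω | ∀ s, 1 ≤ s → s ≤ n → Y s ω ∉ A}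
        = ⋂ s, ⋂ (_ : 1 ≤ s), ⋂ (_ : s ≤ n), (Y s) ⁻¹' Aᶜ := by
      ext ω; simp [Set.mem_iInter]
    rw [he]
    exact (MeasurableSet.iInter fun s => MeasurableSet.iInter fun _ =>
      MeasurableSet.iInter fun _ => (h.2.1 s) MeasurableSet.of_discrete).nullMeasurableSet
  have hanti : Antitone (fun n : ℕ => {ω | ∀ s, 1 ≤ s → s ≤ n → Y s ω ∉ A}) := by
    intro n m hnm ω hω s h1 h2
    exact hω s h1 (h2.trans hnm)
  have htmeas := tendsto_measure_iInter_atTop hmeasE hanti ⟨0, measure_ne_top Q _⟩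
  rw [← hEeq] at htmeas
  have hcomp : (Q ∘ fun n : ℕ => {ω | ∀ s, 1 ≤ s → s ≤ n → Y s ω ∉ A})
      = fun n => sur A n b := funext fun n => hEt n
  rw [hcomp] at htmeas
  have hlim : Tendsto (fun n => sur A n b) atTop (𝓝 (ENNReal.ofReal (1/(2*(b:ℝ))))) := by
    have hsucc : ∀ n, sur A (n+1) b
        = ENNReal.ofReal (((b:ℝ)+1)/(2*(b:ℝ))) * ENNReal.ofReal (fseq b n (b+1)) := by
      intro n
      have hnotup : (b + 1) ∉ A := by
        intro hmem; exact absurd hmem.2.1 (by omega)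
      have hcup := condStepZ_up_pos b hb
      rw [sur_succ, if_neg hnotup, hcup, sur_eq_ofReal_fseq ha hb n (b+1) (by omega)]
      by_cases hb2 : b = 1
      · subst hb2
        rw [if_neg (fun hmem => hmem.2.2 (by norm_num)),
          show condStepZ 1 (1-1) = 0 by norm_num [condStepZ], zero_mul, add_zero]
      · have hmem : b - 1 ∈ A := ⟨by omega, by omega, by omega⟩
        rw [if_pos hmem, add_zero]
    have hshift : Tendsto (fun n => sur A (n+1) b) atTop
        (𝓝 (ENNReal.ofReal (1/(2*(b:ℝ))))) := by
      have h1 : Tendsto (fun n => ENNReal.ofReal (fseq b n (b+1))) atTop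
          (𝓝 (ENNReal.ofReal (1/((b:ℝ)+1)))) :=
        (ENNReal.continuous_ofReal.tendsto _).comp (fseq_tendsto_boundary hb1)
      have h2 := ENNReal.Tendsto.const_mul (a := ENNReal.ofReal (((b:ℝ)+1)/(2*(b:ℝ)))) h1
        (Or.inr ENNReal.ofReal_ne_top)
      have h3 : ENNReal.ofReal (((b:ℝ)+1)/(2*(b:ℝ))) * ENNReal.ofReal (1/((b:ℝ)+1))
          = ENNReal.ofReal (1/(2*(b:ℝ))) := by
        rw [← ENNReal.ofReal_mul (by positivity)]
        congr 1
        field_simp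
      rw [h3] at h2
      exact Tendsto.congr (fun n => (hsucc n).symm) h2
    exact (tendsto_add_atTop_iff_nat 1).mp hshift
  exact tendsto_nhds_unique htmeas hlim

lemma interior_escape_zero {Ω : Type*} [MeasurableSpace Ω] {Q : Measure Ω} {Y : ℕ → Ω → ℤ}
    {a b x : ℤ} (ha : a < 0) (hb : 0 < b) (h : IsCondWalkZ Q Y x)
    (hax : a ≤ x) (hxb : x ≤ b) (hx0 : x ≠ 0) (hxa : x ≠ a) (hxbne : x ≠ b) :
    Q {ω | ∀ t : ℕ, 1 ≤ t → Y t ω ∉ {z : ℤ | a ≤ z ∧ z ≤ b ∧ z ≠ 0}} = 0 := by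
  set A : Set ℤ := {z : ℤ | a ≤ z ∧ z ≤ b ∧ z ≠ 0} with hA
  have h1 : Q {ω | ∀ s, 1 ≤ s → s ≤ 1 → Y s ω ∉ A} = sur A 1 x := by
    rw [meas_eq_tsum_wt h A 1, tsum_wt]
  have hval : sur A 1 x = 0 := by
    rw [sur_succ]
    by_cases hz : x + 1 = 0
    · have hxm1 : x = -1 := by omega
      subst hxm1
      have hmem : (-1:ℤ) - 1 ∈ A := ⟨by omega, by omega, by omega⟩
      rw [if_neg (fun hmem => hmem.2.2 (by norm_num)),
        show condStepZ (-1) (-1+1) = 0 by norm_num [condStepZ], zero_mul, zero_add,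
        if_pos hmem]
    · have hmem : x + 1 ∈ A := ⟨by omega, by omega, hz⟩
      rw [if_pos hmem, zero_add]
      by_cases hz2 : x - 1 = 0
      · have hx1 : x = 1 := by omega
        subst hx1
        rw [if_neg (fun hmem => hmem.2.2 (by norm_num)),
          show condStepZ 1 (1-1) = 0 by norm_num [condStepZ], zero_mul]
      · have hmem2 : x - 1 ∈ A := ⟨by omega, by omega, hz2⟩
        rw [if_pos hmem2]
  have hsub : {ω | ∀ t : ℕ, 1 ≤ t → Y t ω ∉ A} ⊆ {ω | ∀ s, 1 ≤ s → s ≤ 1 → Y s ω ∉ A} := by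
    intro ω hω s hs1 _
    exact hω s hs1
  have := measure_mono (μ := Q) hsub
  rw [h1, hval] at this
  exact le_antisymm this zero_le

lemma IsCondWalkZ.neg' {Ω : Type*} [MeasurableSpace Ω] {Q : Measure Ω} {Y : ℕ → Ω → ℤ} {x : ℤ}
    (h : IsCondWalkZ Q Y x) : IsCondWalkZ Q (fun t ω => -(Y t ω)) (-x) := by
  obtain ⟨h1, h2, h3⟩ := h
  refine ⟨h1, fun t => Measurable.of_discrete.comp (h2 t), fun t γ hγ => ?_⟩
  have hkey := h3 t (fun s => -(γ s)) (by simp [hγ])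
  have hset : {ω | ∀ s ≤ t, -(Y s ω) = γ s} = {ω | ∀ s ≤ t, Y s ω = -(γ s)} := by
    ext ω
    constructor <;> intro hh s hs <;> have := hh s hs <;> omega
  rw [hset, hkey]
  exact Finset.prod_congr rfl fun s _ => condStepZ_neg (γ s) (γ (s+1))

end Bridge

/-- for integers `a < 0 < b` and `A = {a, …, b} \ {0}`, the
equilibrium measure `e_A(x) = 1_{x ∈ A} Q_x[τ̄_A = ∞] x²` of the conditioned
walk on `ℤ \ {0}` (reversible measure `μ_x = x²`) vanishes except at the two
endpoints `a` and `b`, its total mass (the capacity of `A`) is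
`Q_a[τ̄_A = ∞] a² + Q_b[τ̄_A = ∞] b² = (b - a)/2`: the capacity of the interval
equals half of its diameter. -/
theorem equilibrium_measure_and_capacity_of_interval
    {Ω : Type*} [MeasurableSpace Ω] (Q : ℤ → Measure Ω) (Y : ℤ → ℕ → Ω → ℤ)
    (hQ : ∀ x : ℤ, x ≠ 0 → IsCondWalkZ (Q x) (Y x) x)
    (a b : ℤ) (ha : a < 0) (hb : 0 < b) :
    letI A : Set ℤ := {z : ℤ | a ≤ z ∧ z ≤ b ∧ z ≠ 0}
    ((Q a) {ω | ∀ t : ℕ, 1 ≤ t → Y a t ω ∉ A} * ENNReal.ofReal ((a : ℝ) ^ 2)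
        + (Q b) {ω | ∀ t : ℕ, 1 ≤ t → Y b t ω ∉ A} * ENNReal.ofReal ((b : ℝ) ^ 2)
      = ENNReal.ofReal (((b : ℝ) - (a : ℝ)) / 2))
    ∧ (∀ x ∈ A, x ≠ a → x ≠ b → (Q x) {ω | ∀ t : ℕ, 1 ≤ t → Y x t ω ∉ A} = 0)
    ∧ ∑ x ∈ (Finset.Icc a b).erase 0,
        (Q x) {ω | ∀ t : ℕ, 1 ≤ t → Y x t ω ∉ A} * ENNReal.ofReal ((x : ℝ) ^ 2)
      = ENNReal.ofReal (((b : ℝ) - (a : ℝ)) / 2) := by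
  have haR : ((a:ℝ)) < 0 := by exact_mod_cast ha
  have hbR : (0:ℝ) < (b:ℝ) := by exact_mod_cast hb
  -- escape probability at b
  have hQb : (Q b) {ω | ∀ t : ℕ, 1 ≤ t → Y b t ω ∉ {z : ℤ | a ≤ z ∧ z ≤ b ∧ z ≠ 0}} = ENNReal.ofReal (1/(2*(b:ℝ))) :=
    escape_prob ha hb (hQ b (by omega))
  -- escape probability at a via reflection
  have hQa : (Q a) {ω | ∀ t : ℕ, 1 ≤ t → Y a t ω ∉ {z : ℤ | a ≤ z ∧ z ≤ b ∧ z ≠ 0}} = ENNReal.ofReal (1/(2*(-(a:ℝ)))) := by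
    have hflip := (hQ a (by omega)).neg'
    have h := escape_prob (a := -b) (b := -a) (by omega) (by omega) hflip
    have hsets : {ω | ∀ t : ℕ, 1 ≤ t → (fun t ω => -(Y a t ω)) t ω ∉
          {z : ℤ | -b ≤ z ∧ z ≤ -a ∧ z ≠ 0}}
        = {ω | ∀ t : ℕ, 1 ≤ t → Y a t ω ∉ {z : ℤ | a ≤ z ∧ z ≤ b ∧ z ≠ 0}} := by
      ext ω
      simp only [Set.mem_setOf_eq]
      constructor
      · intro hω t ht hmem
        exact hω t ht ⟨by omega, by omega, by omega⟩
      · intro hω t ht hmem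
        exact hω t ht ⟨by omega, by omega, by omega⟩
    rw [hsets] at h
    rw [h]
    congr 1
    push_cast
    ring
  have hmain : (Q a) {ω | ∀ t : ℕ, 1 ≤ t → Y a t ω ∉ {z : ℤ | a ≤ z ∧ z ≤ b ∧ z ≠ 0}} * ENNReal.ofReal ((a : ℝ) ^ 2)
        + (Q b) {ω | ∀ t : ℕ, 1 ≤ t → Y b t ω ∉ {z : ℤ | a ≤ z ∧ z ≤ b ∧ z ≠ 0}} * ENNReal.ofReal ((b : ℝ) ^ 2)
      = ENNReal.ofReal (((b : ℝ) - (a : ℝ)) / 2) := by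
    have hn1 : (0:ℝ) ≤ 1/(2*(-(a:ℝ))) := div_nonneg (by norm_num) (by linarith)
    have hn2 : (0:ℝ) ≤ 1/(2*((b:ℝ))) := div_nonneg (by norm_num) (by linarith)
    rw [hQa, hQb, ← ENNReal.ofReal_mul hn1, ← ENNReal.ofReal_mul hn2]
    rw [← ENNReal.ofReal_add (mul_nonneg hn1 (sq_nonneg _)) (mul_nonneg hn2 (sq_nonneg _))]
    congr 1
    have hane : (a:ℝ) ≠ 0 := ne_of_lt haR
    have hbne : (b:ℝ) ≠ 0 := ne_of_gt hbR
    field_simp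
    ring
  have hinterior : ∀ x ∈ {z : ℤ | a ≤ z ∧ z ≤ b ∧ z ≠ 0}, x ≠ a → x ≠ b →
      (Q x) {ω | ∀ t : ℕ, 1 ≤ t → Y x t ω ∉ {z : ℤ | a ≤ z ∧ z ≤ b ∧ z ≠ 0}} = 0 := by
    intro x hx hxa hxb
    obtain ⟨h1, h2, h3⟩ := hx
    exact interior_escape_zero ha hb (hQ x h3) h1 h2 h3 hxa hxb
  refine ⟨hmain, hinterior, ?_⟩
  have hamem : a ∈ (Finset.Icc a b).erase 0 := by
    rw [Finset.mem_erase, Finset.mem_Icc]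
    exact ⟨by omega, by omega, by omega⟩
  have hbmem : b ∈ ((Finset.Icc a b).erase 0).erase a := by
    rw [Finset.mem_erase, Finset.mem_erase, Finset.mem_Icc]
    exact ⟨by omega, by omega, by omega, by omega⟩
  rw [← Finset.add_sum_erase _ _ hamem, ← Finset.add_sum_erase _ _ hbmem]
  have hrest : ∑ x ∈ (((Finset.Icc a b).erase 0).erase a).erase b,
      (Q x) {ω | ∀ t : ℕ, 1 ≤ t → Y x t ω ∉ {z : ℤ | a ≤ z ∧ z ≤ b ∧ z ≠ 0}} * ENNReal.ofReal ((x : ℝ) ^ 2) = 0 := by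
    apply Finset.sum_eq_zero
    intro x hx
    rw [Finset.mem_erase, Finset.mem_erase, Finset.mem_erase, Finset.mem_Icc] at hx
    obtain ⟨hxb, hxa, hx0, hax, hxb'⟩ := hx
    rw [hinterior x ⟨hax, hxb', hx0⟩ hxa hxb, zero_mul]
  rw [hrest, add_zero, ← hmain]
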